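/- arXiv:1709.03679 — 10 statements merged into one kernel-verified Lean document; each statement's English description precedes it below -/
import Mathlib

section
/- The matrix A A'_m equals C_m C_mᵀ, and consequently A A'_m is symmetric and positive semidefinite. -/
open Matrix

/-- The Euclidean (ℓ²) norm of a vector in `Fin n → ℝ`. -/
noncomputable def euclNorm {n : ℕ} (v : Fin n → ℝ) : ℝ :=
  ‖(EuclideanSpace.equiv (Fin n) ℝ).symm v‖

/-- With the Arnoldi-type decomposition `A·Wₘ = Wₘ₊₁·Hₘ`, the matrix
`A·A'ₘ` (with `A'ₘ = Wₘ Hₘᵀ Wₘ₊₁ᵀ`) equals `Cₘ Cₘᵀ` (with `Cₘ = Wₘ₊₁ Hₘ`), and consequently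
`A·A'ₘ` is symmetric and positive semidefinite. -/
theorem stmt_0 {N m : ℕ} (A : Matrix (Fin N) (Fin N) ℝ) (b : Fin N → ℝ) (hb : b ≠ 0)
    (W1 : Matrix (Fin N) (Fin (m + 1)) ℝ) (H : Matrix (Fin (m + 1)) (Fin m) ℝ)
    (Wm : Matrix (Fin N) (Fin m) ℝ)
    (hW1 : W1ᵀ * W1 = 1)
    (hcol : ∀ i, W1 i 0 = b i / euclNorm b)
    (hWm : Wm = W1.submatrix id Fin.castSucc)
    (hArn : A * Wm = W1 * H)
    (A' : Matrix (Fin N) (Fin N) ℝ) (hA' : A' = Wm * Hᵀ * W1ᵀ)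
    (C : Matrix (Fin N) (Fin m) ℝ) (hC : C = W1 * H) :
    A * A' = C * Cᵀ ∧ (A * A').IsSymm ∧ (A * A').PosSemidef := by
  have key : A * A' = C * Cᵀ := by
    rw [hA', hC, transpose_mul, ← Matrix.mul_assoc, ← Matrix.mul_assoc, hArn,
      Matrix.mul_assoc]
  refine ⟨key, ?_, ?_⟩
  · rw [key]
    unfold Matrix.IsSymm
    rw [transpose_mul, transpose_transpose]
  · rw [key]
    have := Matrix.posSemidef_self_mul_conjTranspose C
    simpa [Matrix.conjTranspose_eq_transpose_of_trivial] using this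
end

section
/- If H_m is upper Hessenberg (its (i,j) entry vanishes whenever i > j+1) and all its subdiagonal entries h_{j+1,j}, j = 1, …, m, are nonzero, then the matrix A'_m = W_m H_mᵀ W_{m+1}ᵀ has rank exactly m. -/
open Matrix

lemma rank_mul_left_eq {N m k : ℕ} (B : Matrix (Fin N) (Fin m) ℝ)
    (C : Matrix (Fin m) (Fin k) ℝ) (h : Bᵀ * B = 1) : (B * C).rank = C.rank := by
  refine le_antisymm (rank_mul_le_right _ _) ?_
  calc C.rank = ((Bᵀ * B) * C).rank := by rw [h, Matrix.one_mul]
    _ = (Bᵀ * (B * C)).rank := by rw [Matrix.mul_assoc]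
    _ ≤ (B * C).rank := rank_mul_le_right _ _

lemma rank_mul_right_eq {N m k : ℕ} (C : Matrix (Fin k) (Fin m) ℝ)
    (B : Matrix (Fin N) (Fin m) ℝ) (h : Bᵀ * B = 1) : (C * Bᵀ).rank = C.rank := by
  refine le_antisymm (rank_mul_le_left _ _) ?_
  calc C.rank = (C * (Bᵀ * B)).rank := by rw [h, Matrix.mul_one]
    _ = ((C * Bᵀ) * B).rank := by rw [Matrix.mul_assoc]
    _ ≤ (C * Bᵀ).rank := rank_mul_le_left _ _

/-- If `Hₘ` is upper Hessenberg with nonvanishing subdiagonal entries, then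
the matrix `A'ₘ = Wₘ Hₘᵀ Wₘ₊₁ᵀ` has rank exactly `m`. -/
theorem stmt_2 {N m : ℕ} (A : Matrix (Fin N) (Fin N) ℝ) (b : Fin N → ℝ) (hb : b ≠ 0)
    (W1 : Matrix (Fin N) (Fin (m + 1)) ℝ) (H : Matrix (Fin (m + 1)) (Fin m) ℝ)
    (Wm : Matrix (Fin N) (Fin m) ℝ)
    (hW1 : W1ᵀ * W1 = 1)
    (hcol : ∀ i, W1 i 0 = b i / euclNorm b)
    (hWm : Wm = W1.submatrix id Fin.castSucc)
    (hArn : A * Wm = W1 * H)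
    (hHess : ∀ (i : Fin (m + 1)) (j : Fin m), (j : ℕ) + 1 < (i : ℕ) → H i j = 0)
    (hsub : ∀ j : Fin m, H j.succ j ≠ 0)
    (A' : Matrix (Fin N) (Fin N) ℝ) (hA' : A' = Wm * Hᵀ * W1ᵀ) :
    A'.rank = m := by
  -- Wm has orthonormal columns
  have hWmo : Wmᵀ * Wm = 1 := by
    ext i j
    have h1 := congrFun (congrFun hW1 i.castSucc) j.castSucc
    simp only [Matrix.mul_apply, transpose_apply, hWm, submatrix_apply, id_eq] at *
    rw [h1]
    by_cases hij : i = j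
    · simp [hij, Matrix.one_apply]
    · simp [Matrix.one_apply, hij, fun h => hij (Fin.castSucc_injective _ h)]
  -- rank H = m
  set S : Matrix (Fin m) (Fin m) ℝ := H.submatrix Fin.succ id with hS
  have hStri : ∀ i j : Fin m, j < i → S i j = 0 := by
    intro i j hij
    exact hHess i.succ j (by simpa using Nat.succ_lt_succ hij)
  have hdet : S.det ≠ 0 := by
    rw [Matrix.det_of_upperTriangular hStri]
    exact Finset.prod_ne_zero_iff.2 fun j _ => hsub j
  have hSrank : S.rank = m := by
    rw [Matrix.rank_of_isUnit S ((Matrix.isUnit_iff_isUnit_det S).2 hdet.isUnit)]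
    simp
  have hSle : S.rank ≤ H.rank := by
    have : S = (Matrix.of fun (i : Fin m) (j : Fin (m+1)) => if j = i.succ then (1:ℝ) else 0) * H := by
      ext i j
      simp [Matrix.mul_apply, hS]
    rw [this]
    exact rank_mul_le_right _ _
  have hHrank : H.rank = m := by
    rw [hSrank] at hSle
    exact le_antisymm (Matrix.rank_le_width H) hSle
  rw [hA', Matrix.mul_assoc, rank_mul_left_eq _ _ hWmo, rank_mul_right_eq _ _ hW1,
    Matrix.rank_transpose, hHrank]
end

section
/- If y_m ∈ ℝ^N satisfies C_m C_mᵀ y_m = b, then the vector x_m = W_m s_m, where s_m = H_mᵀ W_{m+1}ᵀ y_m ∈ ℝ^m, satisfies A x_m = b. -/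
open Matrix

/-- If `yₘ` satisfies `Cₘ Cₘᵀ yₘ = b`, then `xₘ = Wₘ sₘ`, with
`sₘ = Hₘᵀ Wₘ₊₁ᵀ yₘ`, satisfies `A xₘ = b`. -/
theorem stmt_3 {N m : ℕ} (A : Matrix (Fin N) (Fin N) ℝ) (b : Fin N → ℝ) (hb : b ≠ 0)
    (W1 : Matrix (Fin N) (Fin (m + 1)) ℝ) (H : Matrix (Fin (m + 1)) (Fin m) ℝ)
    (Wm : Matrix (Fin N) (Fin m) ℝ)
    (hW1 : W1ᵀ * W1 = 1)
    (hcol : ∀ i, W1 i 0 = b i / euclNorm b)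
    (hWm : Wm = W1.submatrix id Fin.castSucc)
    (hArn : A * Wm = W1 * H)
    (C : Matrix (Fin N) (Fin m) ℝ) (hC : C = W1 * H)
    (y : Fin N → ℝ) (hy : (C * Cᵀ).mulVec y = b)
    (s : Fin m → ℝ) (hs : s = Hᵀ.mulVec (W1ᵀ.mulVec y))
    (x : Fin N → ℝ) (hx : x = Wm.mulVec s) :
    A.mulVec x = b := by
  subst hx hs hC
  rw [← hy]
  rw [mulVec_mulVec, hArn, ← mulVec_mulVec]
  simp [mulVec_mulVec, transpose_mul, Matrix.mul_assoc]
end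

section
/- If s_m ∈ ℝ^m is such that x_m = W_m s_m satisfies A x_m = b, then the system H_m H_mᵀ t = ‖b‖ e_1 has a solution t_m ∈ ℝ^{m+1}, and for any such solution the vector y_m = W_{m+1} t_m satisfies C_m C_mᵀ y_m = b. -/
open Matrix

/-- Over `ℝ`, the range of `A * Aᵀ` equals the range of `A` (as `mulVecLin`s). -/
lemma range_mul_transpose_self {p q : ℕ} (A : Matrix (Fin p) (Fin q) ℝ) :
    LinearMap.range (A * Aᵀ).mulVecLin = LinearMap.range A.mulVecLin := by
  apply Submodule.eq_of_le_of_finrank_le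
  · rintro y ⟨v, rfl⟩
    exact ⟨Aᵀ.mulVec v, by simp only [mulVecLin_apply]; exact mulVec_mulVec _ _ _⟩
  · have h1 : (A * Aᵀ).rank = A.rank := A.rank_self_mul_transpose
    simpa [Matrix.rank] using h1.ge

/-- If `xₘ = Wₘ sₘ` satisfies `A xₘ = b`, then the system
`Hₘ Hₘᵀ t = ‖b‖ e₁` has a solution, and for any such solution `tₘ` the vector
`yₘ = Wₘ₊₁ tₘ` satisfies `Cₘ Cₘᵀ yₘ = b`. -/
theorem stmt_5 {N m : ℕ} (A : Matrix (Fin N) (Fin N) ℝ) (b : Fin N → ℝ) (hb : b ≠ 0)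
    (W1 : Matrix (Fin N) (Fin (m + 1)) ℝ) (H : Matrix (Fin (m + 1)) (Fin m) ℝ)
    (Wm : Matrix (Fin N) (Fin m) ℝ)
    (hW1 : W1ᵀ * W1 = 1)
    (hcol : ∀ i, W1 i 0 = b i / euclNorm b)
    (hWm : Wm = W1.submatrix id Fin.castSucc)
    (hArn : A * Wm = W1 * H)
    (C : Matrix (Fin N) (Fin m) ℝ) (hC : C = W1 * H)
    (s : Fin m → ℝ) (x : Fin N → ℝ) (hx : x = Wm.mulVec s)
    (hAx : A.mulVec x = b) :
    (∃ t : Fin (m + 1) → ℝ,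
        (H * Hᵀ).mulVec t = euclNorm b • (Pi.single 0 1 : Fin (m + 1) → ℝ)) ∧
    ∀ t : Fin (m + 1) → ℝ,
      (H * Hᵀ).mulVec t = euclNorm b • (Pi.single 0 1 : Fin (m + 1) → ℝ) →
      (C * Cᵀ).mulVec (W1.mulVec t) = b := by
  -- ‖b‖ ≠ 0
  have hnb : euclNorm b ≠ 0 := by
    simp only [euclNorm, norm_ne_zero_iff]
    intro h
    exact hb (by simpa using congrArg (EuclideanSpace.equiv (Fin N) ℝ) h)
  -- b = W1 *ᵥ (H *ᵥ s)
  have hbW : b = W1.mulVec (H.mulVec s) := by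
    rw [← hAx, hx, mulVec_mulVec, hArn, ← mulVec_mulVec]
  -- W1ᵀ cancels W1
  have hcancel : ∀ v : Fin (m + 1) → ℝ, W1ᵀ.mulVec (W1.mulVec v) = v := by
    intro v
    rw [mulVec_mulVec, hW1, one_mulVec]
  -- b = ‖b‖ • (W1 *ᵥ e₁)
  have hbe : b = euclNorm b • W1.mulVec (Pi.single 0 1) := by
    ext i
    simp only [Pi.smul_apply, mulVec_single_one, col_apply, mul_one, hcol i, smul_eq_mul]
    field_simp
  -- H *ᵥ s = ‖b‖ • e₁
  have hHs : H.mulVec s = euclNorm b • (Pi.single 0 1 : Fin (m + 1) → ℝ) := by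
    have h1 : W1ᵀ.mulVec b = H.mulVec s := by rw [hbW, hcancel]
    have h2 : W1ᵀ.mulVec b = euclNorm b • (Pi.single 0 1 : Fin (m + 1) → ℝ) := by
      conv_lhs => rw [hbe]
      rw [mulVec_smul, hcancel]
    rw [← h1, h2]
  constructor
  · -- existence: H *ᵥ s ∈ range H = range (H * Hᵀ)
    have hmem : H.mulVec s ∈ LinearMap.range (H * Hᵀ).mulVecLin := by
      rw [range_mul_transpose_self]
      exact ⟨s, rfl⟩
    obtain ⟨t, ht⟩ := hmem
    exact ⟨t, by rw [← hHs]; exact ht⟩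
  · intro t ht
    have hmat : (W1 * H * (Hᵀ * W1ᵀ)) * W1 = W1 * (H * Hᵀ) := by
      rw [Matrix.mul_assoc (W1 * H), Matrix.mul_assoc Hᵀ, hW1, Matrix.mul_one, Matrix.mul_assoc]
    rw [hC, transpose_mul, mulVec_mulVec, hmat, ← mulVec_mulVec, ht, mulVec_smul, ← hbe]
end

section
/- Suppose t_m ∈ ℝ^{m+1} is a minimal-norm solution of H_m H_mᵀ t = ‖b‖ e_1 (i.e., H_m H_mᵀ t_m = ‖b‖ e_1 and ‖t_m‖ ≤ ‖t‖ for every t with H_m H_mᵀ t = ‖b‖ e_1). Then y_m = W_{m+1} t_m is a minimal-norm solution of C_m C_mᵀ y = b: C_m C_mᵀ y_m = b, and ‖y_m‖ ≤ ‖y‖ for every y ∈ ℝ^N with C_m C_mᵀ y = b. -/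
open Matrix

lemma euclNorm_eq {n : ℕ} (v : Fin n → ℝ) : euclNorm v = Real.sqrt (v ⬝ᵥ v) := by
  simp only [euclNorm, EuclideanSpace.norm_eq]
  congr 1
  apply Finset.sum_congr rfl
  intro i _
  simp [dotProduct, sq, abs_mul_abs_self]

/-- If `tₘ` is a minimal-norm solution of `Hₘ Hₘᵀ t = ‖b‖ e₁`, then
`yₘ = Wₘ₊₁ tₘ` is a minimal-norm solution of `Cₘ Cₘᵀ y = b`. -/
theorem stmt_6 {N m : ℕ} (A : Matrix (Fin N) (Fin N) ℝ) (b : Fin N → ℝ) (hb : b ≠ 0)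
    (W1 : Matrix (Fin N) (Fin (m + 1)) ℝ) (H : Matrix (Fin (m + 1)) (Fin m) ℝ)
    (Wm : Matrix (Fin N) (Fin m) ℝ)
    (hW1 : W1ᵀ * W1 = 1)
    (hcol : ∀ i, W1 i 0 = b i / euclNorm b)
    (hWm : Wm = W1.submatrix id Fin.castSucc)
    (hArn : A * Wm = W1 * H)
    (C : Matrix (Fin N) (Fin m) ℝ) (hC : C = W1 * H)
    (t : Fin (m + 1) → ℝ)
    (ht : (H * Hᵀ).mulVec t = euclNorm b • (Pi.single 0 1 : Fin (m + 1) → ℝ))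
    (htmin : ∀ t' : Fin (m + 1) → ℝ,
      (H * Hᵀ).mulVec t' = euclNorm b • (Pi.single 0 1 : Fin (m + 1) → ℝ) →
      euclNorm t ≤ euclNorm t')
    (y : Fin N → ℝ) (hy : y = W1.mulVec t) :
    (C * Cᵀ).mulVec y = b ∧
    ∀ y' : Fin N → ℝ, (C * Cᵀ).mulVec y' = b → euclNorm y ≤ euclNorm y' := by
  have hnb : euclNorm b ≠ 0 := by
    simp only [euclNorm, ne_eq, norm_eq_zero]
    intro h
    exact hb (by simpa using congrArg (EuclideanSpace.equiv (Fin N) ℝ) h)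
  -- b = ‖b‖ • (W1 *ᵥ e₁)
  have hbe : b = euclNorm b • (W1 *ᵥ (Pi.single 0 1 : Fin (m + 1) → ℝ)) := by
    funext i
    have h0 : (W1 *ᵥ (Pi.single 0 1 : Fin (m + 1) → ℝ)) i = W1 i 0 := by
      simp [Matrix.mulVec, dotProduct, Pi.single_apply]
    simp only [Pi.smul_apply, smul_eq_mul, h0, hcol i]
    field_simp
  -- orthonormality in mulVec form
  have horth : ∀ v : Fin (m + 1) → ℝ, W1ᵀ *ᵥ (W1 *ᵥ v) = v := by
    intro v
    rw [Matrix.mulVec_mulVec, hW1, Matrix.one_mulVec]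
  -- inner products preserved
  have hdot : ∀ u v : Fin (m + 1) → ℝ, (W1 *ᵥ u) ⬝ᵥ (W1 *ᵥ v) = u ⬝ᵥ v := by
    intro u v
    rw [Matrix.dotProduct_mulVec, ← Matrix.mulVec_transpose, horth]
  have hcross : ∀ (u : Fin N → ℝ) (v : Fin (m + 1) → ℝ),
      u ⬝ᵥ (W1 *ᵥ v) = (W1ᵀ *ᵥ u) ⬝ᵥ v := by
    intro u v
    rw [Matrix.dotProduct_mulVec, Matrix.mulVec_transpose]
  have hCC : C * Cᵀ = W1 * (H * Hᵀ) * W1ᵀ := by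
    rw [hC, Matrix.transpose_mul, Matrix.mul_assoc, Matrix.mul_assoc, Matrix.mul_assoc]
  have hM : (W1 * (H * Hᵀ) * W1ᵀ) * W1 = W1 * (H * Hᵀ) := by
    rw [Matrix.mul_assoc (W1 * (H * Hᵀ)), hW1, Matrix.mul_one]
  have h1 : (C * Cᵀ).mulVec y = b := by
    rw [hCC, hy, Matrix.mulVec_mulVec, hM, ← Matrix.mulVec_mulVec, ht,
      Matrix.mulVec_smul, ← hbe]
  refine ⟨h1, fun y' hy' => ?_⟩
  have hWb : W1ᵀ *ᵥ b = euclNorm b • (Pi.single 0 1 : Fin (m + 1) → ℝ) := by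
    conv_lhs => rw [hbe]
    rw [Matrix.mulVec_smul, horth]
  set t' : Fin (m + 1) → ℝ := W1ᵀ *ᵥ y' with ht'
  have h2 : W1ᵀ * (C * Cᵀ) = (H * Hᵀ) * W1ᵀ := by
    rw [hCC, ← Matrix.mul_assoc, ← Matrix.mul_assoc, hW1, Matrix.one_mul]
  have hsol : (H * Hᵀ).mulVec t' = euclNorm b • (Pi.single 0 1 : Fin (m + 1) → ℝ) := by
    calc (H * Hᵀ) *ᵥ t' = ((H * Hᵀ) * W1ᵀ) *ᵥ y' := by rw [ht', Matrix.mulVec_mulVec]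
      _ = (W1ᵀ * (C * Cᵀ)) *ᵥ y' := by rw [h2]
      _ = W1ᵀ *ᵥ ((C * Cᵀ) *ᵥ y') := by rw [Matrix.mulVec_mulVec]
      _ = W1ᵀ *ᵥ b := by rw [hy']
      _ = euclNorm b • (Pi.single 0 1 : Fin (m + 1) → ℝ) := hWb
  have hty : euclNorm y = euclNorm t := by
    rw [hy, euclNorm_eq, euclNorm_eq, hdot]
  have htt' : euclNorm t' ≤ euclNorm y' := by
    rw [euclNorm_eq, euclNorm_eq]
    apply Real.sqrt_le_sqrt
    have hz : (0:ℝ) ≤ (y' - W1 *ᵥ t') ⬝ᵥ (y' - W1 *ᵥ t') :=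
      Finset.sum_nonneg fun i _ => mul_self_nonneg _
    have hc1 : y' ⬝ᵥ (W1 *ᵥ t') = t' ⬝ᵥ t' := by rw [hcross, ← ht']
    have hc2 : (W1 *ᵥ t') ⬝ᵥ y' = t' ⬝ᵥ t' := by
      rw [dotProduct_comm, hc1]
    have hexp : (y' - W1 *ᵥ t') ⬝ᵥ (y' - W1 *ᵥ t') = y' ⬝ᵥ y' - t' ⬝ᵥ t' := by
      rw [dotProduct_sub, sub_dotProduct, sub_dotProduct,
        hdot, hc1, hc2]
      ring
    linarith [hexp ▸ hz]
  calc euclNorm y = euclNorm t := hty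
    _ ≤ euclNorm t' := htmin t' hsol
    _ ≤ euclNorm y' := htt'
end

section
/- (Transpose-free CGLS characterization.) Let k ≤ m and suppose y ∈ ℝ^N satisfies the MINRES conditions for the system C_m C_mᵀ y = b: y ∈ K_k(C_m C_mᵀ, b), and ⟨b − C_m C_mᵀ y, C_m C_mᵀ v⟩ = 0 for all v ∈ K_k(C_m C_mᵀ, b). Then x = A'_m y satisfies: x ∈ K_k(P_m Aᵀ A, P_m Aᵀ b), and ⟨b − A x, A w⟩ = 0 for all w ∈ K_k(P_m Aᵀ A, P_m Aᵀ b). -/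
open Matrix

/-- The Krylov subspace `K_k(C, d) = span {d, C d, …, C^{k-1} d}`. -/
def Krylov {n : ℕ} (C : Matrix (Fin n) (Fin n) ℝ) (d : Fin n → ℝ) (k : ℕ) :
    Submodule ℝ (Fin n → ℝ) :=
  Submodule.span ℝ {v : Fin n → ℝ | ∃ j < k, v = (C ^ j).mulVec d}

private lemma comm_pow {n : ℕ} (A B : Matrix (Fin n) (Fin n) ℝ) (j : ℕ) :
    (B * A) ^ j * B = B * (A * B) ^ j := by
  induction j with
  | zero => simp
  | succ i ih =>
    calc (B * A) ^ (i + 1) * B = (B * A) ^ i * (B * (A * B)) := by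
          rw [pow_succ, Matrix.mul_assoc, Matrix.mul_assoc]
      _ = (B * A) ^ i * B * (A * B) := by rw [Matrix.mul_assoc]
      _ = B * (A * B) ^ i * (A * B) := by rw [ih]
      _ = B * (A * B) ^ (i + 1) := by rw [pow_succ, Matrix.mul_assoc]

/-- transpose-free CGLS characterization. If `y` satisfies the MINRES
conditions for `Cₘ Cₘᵀ y = b` on `K_k(Cₘ Cₘᵀ, b)`, then `x = A'ₘ y` lies in
`K_k(Pₘ Aᵀ A, Pₘ Aᵀ b)` and `b − A x ⊥ A · K_k(Pₘ Aᵀ A, Pₘ Aᵀ b)`. -/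
theorem stmt_12 {N m : ℕ} (A : Matrix (Fin N) (Fin N) ℝ) (b : Fin N → ℝ) (hb : b ≠ 0)
    (W1 : Matrix (Fin N) (Fin (m + 1)) ℝ) (H : Matrix (Fin (m + 1)) (Fin m) ℝ)
    (Wm : Matrix (Fin N) (Fin m) ℝ)
    (hW1 : W1ᵀ * W1 = 1)
    (hcol : ∀ i, W1 i 0 = b i / euclNorm b)
    (hWm : Wm = W1.submatrix id Fin.castSucc)
    (hArn : A * Wm = W1 * H)
    (A' : Matrix (Fin N) (Fin N) ℝ) (hA' : A' = Wm * Hᵀ * W1ᵀ)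
    (C : Matrix (Fin N) (Fin m) ℝ) (hC : C = W1 * H)
    (P : Matrix (Fin N) (Fin N) ℝ) (hP : P = Wm * Wmᵀ)
    (k : ℕ) (hk : k ≤ m)
    (y : Fin N → ℝ)
    (hyK : y ∈ Krylov (C * Cᵀ) b k)
    (hyO : ∀ v ∈ Krylov (C * Cᵀ) b k,
      (b - (C * Cᵀ).mulVec y) ⬝ᵥ ((C * Cᵀ).mulVec v) = 0)
    (x : Fin N → ℝ) (hx : x = A'.mulVec y) :
    x ∈ Krylov (P * Aᵀ * A) ((P * Aᵀ).mulVec b) k ∧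
    ∀ w ∈ Krylov (P * Aᵀ * A) ((P * Aᵀ).mulVec b) k,
      (b - A.mulVec x) ⬝ᵥ (A.mulVec w) = 0 := by
  have hPA : P * Aᵀ = A' := by
    rw [hP, hA', Matrix.mul_assoc, ← Matrix.transpose_mul, hArn, Matrix.transpose_mul,
      ← Matrix.mul_assoc]
  have hAA' : A * A' = C * Cᵀ := by
    rw [hA', hC, Matrix.transpose_mul]
    simp only [← Matrix.mul_assoc]
    rw [hArn]
  have hvec : ∀ (j : ℕ) (v : Fin N → ℝ),
      (A' * A) ^ j *ᵥ (A' *ᵥ v) = A' *ᵥ ((C * Cᵀ) ^ j *ᵥ v) := by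
    intro j v
    rw [Matrix.mulVec_mulVec, Matrix.mulVec_mulVec, comm_pow, hAA']
  rw [hPA]
  have hmap : Krylov (A' * A) (A' *ᵥ b) k = (Krylov (C * Cᵀ) b k).map A'.mulVecLin := by
    unfold Krylov
    rw [Submodule.map_span]
    congr 1
    ext v
    simp only [Set.mem_image, Set.mem_setOf_eq]
    constructor
    · rintro ⟨j, hj, rfl⟩
      exact ⟨(C * Cᵀ) ^ j *ᵥ b, ⟨j, hj, rfl⟩, by rw [Matrix.mulVecLin_apply, ← hvec]⟩
    · rintro ⟨w, ⟨j, hj, rfl⟩, rfl⟩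
      exact ⟨j, hj, by rw [Matrix.mulVecLin_apply, ← hvec]⟩
  constructor
  · rw [hx, hmap]
    exact ⟨y, hyK, rfl⟩
  · intro w hw
    rw [hmap] at hw
    obtain ⟨v, hv, rfl⟩ := hw
    have h0 := hyO v hv
    rw [hx, Matrix.mulVecLin_apply, Matrix.mulVec_mulVec, Matrix.mulVec_mulVec, hAA']
    exact h0
end

section
/- (Transpose-free CGNE characterization.) Let k ≤ m and suppose y ∈ ℝ^N satisfies the CG conditions for the system C_m C_mᵀ y = b: y ∈ K_k(C_m C_mᵀ, b), and ⟨b − C_m C_mᵀ y, v⟩ = 0 for all v ∈ K_k(C_m C_mᵀ, b). Then x = A'_m y satisfies: x lies in the image of K_k(A P_m Aᵀ, b) under the map u ↦ P_m Aᵀ u, and for every x̂ ∈ ℝ^N with A x̂ = b one has ⟨x̂ − x, Aᵀ v⟩ = 0 for all v ∈ K_k(A P_m Aᵀ, b). -/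
open Matrix

/-- transpose-free CGNE characterization. If `y` satisfies the CG
conditions for `Cₘ Cₘᵀ y = b` on `K_k(Cₘ Cₘᵀ, b)`, then `x = A'ₘ y` lies in
`Pₘ Aᵀ · K_k(A Pₘ Aᵀ, b)`, and for every `x̂` with `A x̂ = b` one has
`x̂ − x ⊥ Aᵀ · K_k(A Pₘ Aᵀ, b)`. -/
theorem stmt_13 {N m : ℕ} (A : Matrix (Fin N) (Fin N) ℝ) (b : Fin N → ℝ) (hb : b ≠ 0)
    (W1 : Matrix (Fin N) (Fin (m + 1)) ℝ) (H : Matrix (Fin (m + 1)) (Fin m) ℝ)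
    (Wm : Matrix (Fin N) (Fin m) ℝ)
    (hW1 : W1ᵀ * W1 = 1)
    (hcol : ∀ i, W1 i 0 = b i / euclNorm b)
    (hWm : Wm = W1.submatrix id Fin.castSucc)
    (hArn : A * Wm = W1 * H)
    (A' : Matrix (Fin N) (Fin N) ℝ) (hA' : A' = Wm * Hᵀ * W1ᵀ)
    (C : Matrix (Fin N) (Fin m) ℝ) (hC : C = W1 * H)
    (P : Matrix (Fin N) (Fin N) ℝ) (hP : P = Wm * Wmᵀ)
    (k : ℕ) (hk : k ≤ m)
    (y : Fin N → ℝ)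
    (hyK : y ∈ Krylov (C * Cᵀ) b k)
    (hyO : ∀ v ∈ Krylov (C * Cᵀ) b k, (b - (C * Cᵀ).mulVec y) ⬝ᵥ v = 0)
    (x : Fin N → ℝ) (hx : x = A'.mulVec y) :
    x ∈ Submodule.map (Matrix.mulVecLin (P * Aᵀ)) (Krylov (A * P * Aᵀ) b k) ∧
    ∀ xhat : Fin N → ℝ, A.mulVec xhat = b →
      ∀ v ∈ Krylov (A * P * Aᵀ) b k, (xhat - x) ⬝ᵥ (Aᵀ.mulVec v) = 0 := by
  have hCA : C = A * Wm := by rw [hC, hArn]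
  have hCC : C * Cᵀ = A * P * Aᵀ := by
    rw [hCA, hP, transpose_mul, Matrix.mul_assoc, Matrix.mul_assoc, Matrix.mul_assoc]
  have hA'PA : A' = P * Aᵀ := by
    rw [hA', hP, Matrix.mul_assoc, ← transpose_mul, ← hArn, transpose_mul, Matrix.mul_assoc]
  constructor
  · refine ⟨y, ?_, ?_⟩
    · rw [← hCC]; exact hyK
    · rw [mulVecLin_apply, ← hA'PA, hx]
  · intro xhat hxhat v hv
    have h1 : (xhat - x) ⬝ᵥ (Aᵀ.mulVec v) = (A.mulVec (xhat - x)) ⬝ᵥ v := by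
      rw [dotProduct_mulVec, vecMul_transpose]
    rw [h1]
    have h2 : A.mulVec (xhat - x) = b - (C * Cᵀ).mulVec y := by
      rw [mulVec_sub, hxhat, hx, hA'PA, hCC]
      simp [mulVec_mulVec, Matrix.mul_assoc]
    rw [h2]
    exact hyO v (by rw [hCC]; exact hv)
end

section
/- For every t ∈ ℝ^{m+1}, ‖b − C_m C_mᵀ (W_{m+1} t)‖ = ‖ ‖b‖ e_1 − H_m H_mᵀ t ‖, where e_1 is the first canonical basis vector of ℝ^{m+1}. -/
open Matrix

lemma norm_mulVec {N n : ℕ} (W : Matrix (Fin N) (Fin n) ℝ) (hW : Wᵀ * W = 1)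
    (x : Fin n → ℝ) : euclNorm (W.mulVec x) = euclNorm x := by
  rw [euclNorm_eq, euclNorm_eq]
  congr 1
  rw [Matrix.dotProduct_mulVec, ← Matrix.mulVec_transpose, Matrix.mulVec_mulVec, hW,
    Matrix.one_mulVec]

/-- For every `t ∈ ℝ^{m+1}`,
`‖b − Cₘ Cₘᵀ (Wₘ₊₁ t)‖ = ‖ ‖b‖ e₁ − Hₘ Hₘᵀ t ‖`. -/
theorem stmt_15 {N m : ℕ} (A : Matrix (Fin N) (Fin N) ℝ) (b : Fin N → ℝ) (hb : b ≠ 0)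
    (W1 : Matrix (Fin N) (Fin (m + 1)) ℝ) (H : Matrix (Fin (m + 1)) (Fin m) ℝ)
    (Wm : Matrix (Fin N) (Fin m) ℝ)
    (hW1 : W1ᵀ * W1 = 1)
    (hcol : ∀ i, W1 i 0 = b i / euclNorm b)
    (hWm : Wm = W1.submatrix id Fin.castSucc)
    (hArn : A * Wm = W1 * H)
    (C : Matrix (Fin N) (Fin m) ℝ) (hC : C = W1 * H) :
    ∀ t : Fin (m + 1) → ℝ,
      euclNorm (b - (C * Cᵀ).mulVec (W1.mulVec t)) =
        euclNorm (euclNorm b • (Pi.single 0 1 : Fin (m + 1) → ℝ) - (H * Hᵀ).mulVec t) := by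
  intro t
  have hnb : euclNorm b ≠ 0 := by
    simpa [euclNorm] using hb
  have hbW : W1.mulVec (euclNorm b • (Pi.single 0 1 : Fin (m + 1) → ℝ)) = b := by
    funext i
    simp only [Matrix.mulVec, dotProduct, Pi.smul_apply, Pi.single_apply, smul_eq_mul,
      mul_ite, mul_one, mul_zero, Finset.sum_ite_eq', Finset.mem_univ, if_true]
    rw [hcol i]
    field_simp
  have hmat : C * Cᵀ * W1 = W1 * (H * Hᵀ) := by
    rw [hC, Matrix.transpose_mul]
    calc W1 * H * (Hᵀ * W1ᵀ) * W1 = W1 * H * Hᵀ * (W1ᵀ * W1) := by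
          simp [Matrix.mul_assoc]
      _ = W1 * (H * Hᵀ) := by rw [hW1, Matrix.mul_one, Matrix.mul_assoc]
  have key : b - (C * Cᵀ).mulVec (W1.mulVec t)
      = W1.mulVec (euclNorm b • (Pi.single 0 1 : Fin (m + 1) → ℝ) - (H * Hᵀ).mulVec t) := by
    rw [Matrix.mulVec_sub, hbW, Matrix.mulVec_mulVec, Matrix.mulVec_mulVec, hmat]
  rw [key, norm_mulVec W1 hW1]
end

section
/- For every k ≥ 1, the Krylov subspace K_k(C_m C_mᵀ, b) equals the image under W_{m+1} of the Krylov subspace K_k(H_m H_mᵀ, ‖b‖ e_1); that is, K_k(C_m C_mᵀ, b) = { W_{m+1} u : u ∈ K_k(H_m H_mᵀ, ‖b‖ e_1) }, where e_1 is the first canonical basis vector of ℝ^{m+1}. -/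
open Matrix

/-- For every `k ≥ 1`, `K_k(Cₘ Cₘᵀ, b)` equals the image under `Wₘ₊₁`
of `K_k(Hₘ Hₘᵀ, ‖b‖ e₁)`. -/
theorem stmt_16 {N m : ℕ} (A : Matrix (Fin N) (Fin N) ℝ) (b : Fin N → ℝ) (hb : b ≠ 0)
    (W1 : Matrix (Fin N) (Fin (m + 1)) ℝ) (H : Matrix (Fin (m + 1)) (Fin m) ℝ)
    (Wm : Matrix (Fin N) (Fin m) ℝ)
    (hW1 : W1ᵀ * W1 = 1)
    (hcol : ∀ i, W1 i 0 = b i / euclNorm b)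
    (hWm : Wm = W1.submatrix id Fin.castSucc)
    (hArn : A * Wm = W1 * H)
    (C : Matrix (Fin N) (Fin m) ℝ) (hC : C = W1 * H)
    (k : ℕ) (hk : 1 ≤ k) :
    Krylov (C * Cᵀ) b k =
      Submodule.map (Matrix.mulVecLin W1)
        (Krylov (H * Hᵀ) (euclNorm b • (Pi.single 0 1 : Fin (m + 1) → ℝ)) k) := by
  set d : Fin (m + 1) → ℝ := euclNorm b • (Pi.single 0 1 : Fin (m + 1) → ℝ) with hd
  have hnorm : euclNorm b ≠ 0 := by
    simp only [euclNorm, norm_ne_zero_iff]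
    intro h
    apply hb
    have := congrArg (EuclideanSpace.equiv (Fin N) ℝ) h
    simpa using this
  have hbd : W1.mulVec d = b := by
    funext i
    have : W1.mulVec d i = euclNorm b * W1 i 0 := by
      simp only [Matrix.mulVec, dotProduct, hd, Pi.smul_apply, smul_eq_mul]
      rw [Finset.sum_eq_single 0]
      · simp [mul_comm]
      · intro j _ hj; simp [Pi.single_apply, hj]
      · simp
    rw [this, hcol i]
    field_simp
  have key : ∀ j : ℕ, ((C * Cᵀ) ^ j).mulVec b = W1.mulVec (((H * Hᵀ) ^ j).mulVec d) := by
    intro j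
    induction j with
    | zero => simpa using hbd.symm
    | succ j ih =>
      have hCC : C * Cᵀ * W1 = W1 * (H * Hᵀ) := by
        rw [hC, Matrix.transpose_mul]
        calc W1 * H * (Hᵀ * W1ᵀ) * W1 = W1 * H * Hᵀ * (W1ᵀ * W1) := by
              simp only [Matrix.mul_assoc]
          _ = W1 * (H * Hᵀ) := by rw [hW1, Matrix.mul_one, Matrix.mul_assoc]
      rw [pow_succ', pow_succ', ← Matrix.mulVec_mulVec, ih, Matrix.mulVec_mulVec, hCC]
      simp [← Matrix.mulVec_mulVec]
  unfold Krylov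
  rw [Submodule.map_span]
  congr 1
  ext v
  constructor
  · rintro ⟨j, hj, rfl⟩
    exact ⟨((H * Hᵀ) ^ j).mulVec d, ⟨j, hj, rfl⟩, (key j).symm⟩
  · rintro ⟨u, ⟨j, hj, rfl⟩, rfl⟩
    exact ⟨j, hj, (key j).symm ▸ rfl⟩
end

section
/- (Hybrid interpretation of TF-CGLS.) Let k ≥ 1 and suppose y ∈ K_k(C_m C_mᵀ, b). Then x = A'_m y can be written as x = W_m t for some t ∈ K_k(H_mᵀ H_m, ‖b‖ H_mᵀ e_1), where e_1 is the first canonical basis vector of ℝ^{m+1}. -/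
open Matrix

/-- hybrid interpretation of TF-CGLS. If `y ∈ K_k(Cₘ Cₘᵀ, b)`, then
`x = A'ₘ y` can be written as `x = Wₘ t` with `t ∈ K_k(Hₘᵀ Hₘ, ‖b‖ Hₘᵀ e₁)`. -/
theorem stmt_17 {N m : ℕ} (A : Matrix (Fin N) (Fin N) ℝ) (b : Fin N → ℝ) (hb : b ≠ 0)
    (W1 : Matrix (Fin N) (Fin (m + 1)) ℝ) (H : Matrix (Fin (m + 1)) (Fin m) ℝ)
    (Wm : Matrix (Fin N) (Fin m) ℝ)
    (hW1 : W1ᵀ * W1 = 1)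
    (hcol : ∀ i, W1 i 0 = b i / euclNorm b)
    (hWm : Wm = W1.submatrix id Fin.castSucc)
    (hArn : A * Wm = W1 * H)
    (A' : Matrix (Fin N) (Fin N) ℝ) (hA' : A' = Wm * Hᵀ * W1ᵀ)
    (C : Matrix (Fin N) (Fin m) ℝ) (hC : C = W1 * H)
    (k : ℕ) (hk : 1 ≤ k)
    (y : Fin N → ℝ) (hy : y ∈ Krylov (C * Cᵀ) b k)
    (x : Fin N → ℝ) (hx : x = A'.mulVec y) :
    ∃ t : Fin m → ℝ,
      t ∈ Krylov (Hᵀ * H) (euclNorm b • Hᵀ.mulVec (Pi.single 0 1 : Fin (m + 1) → ℝ)) k ∧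
      x = Wm.mulVec t := by
  have hnb : euclNorm b ≠ 0 := by
    simp only [euclNorm, norm_ne_zero_iff]
    intro h
    exact hb (by simpa using congrArg (EuclideanSpace.equiv (Fin N) ℝ) h)
  -- b is euclNorm b times the first column of W1
  have hbeq : b = euclNorm b • W1.mulVec (Pi.single 0 1) := by
    funext i
    have : W1.mulVec (Pi.single (0 : Fin (m+1)) (1:ℝ)) i = W1 i 0 := by
      simp [Matrix.mulVec, dotProduct, Pi.single_apply]
    simp only [Pi.smul_apply, smul_eq_mul, this, hcol i]
    field_simp
  have hWb : W1ᵀ.mulVec b = euclNorm b • (Pi.single 0 1 : Fin (m + 1) → ℝ) := by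
    conv_lhs => rw [hbeq]
    rw [Matrix.mulVec_smul, Matrix.mulVec_mulVec, hW1, Matrix.one_mulVec]
  -- key commutation identity
  have hkey : ∀ j : ℕ, Hᵀ * W1ᵀ * (C * Cᵀ) ^ j = (Hᵀ * H) ^ j * (Hᵀ * W1ᵀ) := by
    intro j
    induction j with
    | zero => simp
    | succ j ih =>
      have h1 : Hᵀ * W1ᵀ * (C * Cᵀ) = (Hᵀ * H) * (Hᵀ * W1ᵀ) := by
        rw [hC, Matrix.transpose_mul]
        simp only [Matrix.mul_assoc]
        rw [← Matrix.mul_assoc W1ᵀ W1, hW1, Matrix.one_mul]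
      rw [pow_succ, ← Matrix.mul_assoc, ih, Matrix.mul_assoc, h1, ← Matrix.mul_assoc,
        ← pow_succ]
  set d : Fin m → ℝ := euclNorm b • Hᵀ.mulVec (Pi.single 0 1 : Fin (m + 1) → ℝ) with hd
  -- the linear map y ↦ (HᵀW1ᵀ) y sends generators to generators
  have hgen : ∀ j : ℕ, (Hᵀ * W1ᵀ).mulVec (((C * Cᵀ) ^ j).mulVec b)
      = (((Hᵀ * H) ^ j)).mulVec d := by
    intro j
    rw [Matrix.mulVec_mulVec, hkey j, ← Matrix.mulVec_mulVec, ← Matrix.mulVec_mulVec,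
      hWb, Matrix.mulVec_smul, hd]
  refine ⟨(Hᵀ * W1ᵀ).mulVec y, ?_, ?_⟩
  · have hmap : ((Hᵀ * W1ᵀ).mulVecLin) y ∈
        Submodule.map ((Hᵀ * W1ᵀ).mulVecLin) (Krylov (C * Cᵀ) b k) :=
      Submodule.mem_map_of_mem hy
    rw [Krylov, Submodule.map_span] at hmap
    have hsub : ((Hᵀ * W1ᵀ).mulVecLin) '' {v : Fin N → ℝ | ∃ j < k, v = ((C * Cᵀ) ^ j).mulVec b}
        ⊆ ↑(Krylov (Hᵀ * H) d k) := by
      rintro _ ⟨v, ⟨j, hj, rfl⟩, rfl⟩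
      exact Submodule.subset_span ⟨j, hj, by
        simp only [Matrix.mulVecLin_apply]; exact hgen j⟩
    exact Submodule.span_le.mpr hsub hmap
  · rw [hx, hA', Matrix.mul_assoc, Matrix.mulVec_mulVec]
end
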